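/- Let N ≥ 3 and let R ∈ O(2,ℝ) be the rotation by angle 2π/N. Let v = r(cos α, sin α) and w = s(cos β, sin β) with r, s > 0, and suppose that N(β − α)/π is not an integer. Set S_v = {Rᵏv : k} and S_w = {Rᵏw : k}. Then the joint stabilizer {A ∈ O(2,ℝ) : A·S_v = S_v and A·S_w = S_w} is exactly the cyclic group {Rᵏ : k = 0, …, N−1} of order N generated by R. -/

import Mathlib

open Pointwise

noncomputable def rotM (θ : ℝ) : Matrix (Fin 2) (Fin 2) ℝ :=
  !![Real.cos θ, -Real.sin θ; Real.sin θ, Real.cos θ]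

lemma rotM_mul (a b : ℝ) : rotM a * rotM b = rotM (a + b) := by
  ext i j
  fin_cases i <;> fin_cases j <;>
    simp [rotM, Matrix.mul_apply, Fin.sum_univ_two, Real.cos_add, Real.sin_add] <;> ring

lemma rotM_zero : rotM 0 = 1 := by
  simp [rotM, Matrix.one_fin_two]

lemma rotM_mulVec (θ x y : ℝ) :
    (rotM θ).mulVec ![x, y] =
      ![Real.cos θ * x - Real.sin θ * y, Real.sin θ * x + Real.cos θ * y] := by
  funext i
  fin_cases i <;>
    simp [rotM, Matrix.mulVec, dotProduct, Fin.sum_univ_two] <;> ring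

lemma exists_angle (a c : ℝ) (h : a * a + c * c = 1) :
    ∃ γ : ℝ, Real.cos γ = a ∧ Real.sin γ = c := by
  have ha1 : -1 ≤ a := by nlinarith
  have ha2 : a ≤ 1 := by nlinarith
  have hs : Real.sin (Real.arccos a) = Real.sqrt (1 - a ^ 2) := Real.sin_arccos a
  have hsq : 1 - a ^ 2 = c ^ 2 := by ring_nf; nlinarith
  rcases le_or_gt 0 c with hc | hc
  · exact ⟨Real.arccos a, Real.cos_arccos ha1 ha2, by
      rw [hs, hsq, Real.sqrt_sq hc]⟩
  · refine ⟨-Real.arccos a, by rw [Real.cos_neg]; exact Real.cos_arccos ha1 ha2, ?_⟩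
    rw [Real.sin_neg, hs, hsq]
    rw [show c ^ 2 = (-c) ^ 2 by ring, Real.sqrt_sq (by linarith)]
    ring

lemma angle_eq {x y : ℝ} (hc : Real.cos x = Real.cos y) (hs : Real.sin x = Real.sin y) :
    ∃ m : ℤ, x = y + m * (2 * Real.pi) := by
  have h1 : Real.cos (x - y) = 1 := by
    rw [Real.cos_sub, hc, hs]
    linear_combination Real.sin_sq_add_cos_sq y
  obtain ⟨n, hn⟩ := (Real.cos_eq_one_iff _).mp h1
  exact ⟨n, by linarith⟩


/-- The orthogonal group `O(2,ℝ)` acts on `ℝ²` by matrix-vector multiplication. -/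
noncomputable instance O2SMul : SMul (Matrix.orthogonalGroup (Fin 2) ℝ) (Fin 2 → ℝ) :=
  ⟨fun A v => (A : Matrix (Fin 2) (Fin 2) ℝ).mulVec v⟩

noncomputable instance O2MulAction : MulAction (Matrix.orthogonalGroup (Fin 2) ℝ) (Fin 2 → ℝ) where
  one_smul v := Matrix.one_mulVec v
  mul_smul A B v := by
    show ((A * B : Matrix.orthogonalGroup (Fin 2) ℝ) : Matrix (Fin 2) (Fin 2) ℝ).mulVec v =
      (A : Matrix (Fin 2) (Fin 2) ℝ).mulVec ((B : Matrix (Fin 2) (Fin 2) ℝ).mulVec v)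
    rw [Matrix.mulVec_mulVec]
    norm_cast

set_option maxHeartbeats 1000000 in
set_option synthInstance.maxHeartbeats 1000000 in
/-- For `N ≥ 3`, let `R ∈ O(2,ℝ)` be the rotation by `2π/N`, and let
`v = r(cos α, sin α)`, `w = s(cos β, sin β)` with `r, s > 0` and `N(β - α)/π` not an
integer. Then the joint stabilizer in `O(2,ℝ)` of the rotation orbits
`S_v = {Rᵏv : k}` and `S_w = {Rᵏw : k}` is exactly the cyclic group generated by `R`,
which has order `N`. -/
theorem joint_stabilizer_two_ngons_cyclic
    (N : ℕ) (hN : 3 ≤ N)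
    (R : Matrix.orthogonalGroup (Fin 2) ℝ)
    (hR : (R : Matrix (Fin 2) (Fin 2) ℝ) =
      !![Real.cos (2 * Real.pi / N), -Real.sin (2 * Real.pi / N);
         Real.sin (2 * Real.pi / N),  Real.cos (2 * Real.pi / N)])
    (r s α β : ℝ) (hr : 0 < r) (hs : 0 < s)
    (v w : Fin 2 → ℝ)
    (hvdef : v = ![r * Real.cos α, r * Real.sin α])
    (hwdef : w = ![s * Real.cos β, s * Real.sin β])
    (hoff : ∀ m : ℤ, (N : ℝ) * (β - α) / Real.pi ≠ (m : ℝ))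
    (Sv Sw : Set (Fin 2 → ℝ))
    (hSv : Sv = {x | ∃ k : ℕ, k < N ∧ (R ^ k) • v = x})
    (hSw : Sw = {x | ∃ k : ℕ, k < N ∧ (R ^ k) • w = x}) :
    MulAction.stabilizer (Matrix.orthogonalGroup (Fin 2) ℝ) Sv ⊓
        MulAction.stabilizer (Matrix.orthogonalGroup (Fin 2) ℝ) Sw =
      Subgroup.zpowers R ∧
      Nat.card (Subgroup.zpowers R) = N := by
  set θ : ℝ := 2 * Real.pi / N with hθ
  have hN0 : 0 < N := by omega
  have hNR : (N : ℝ) ≠ 0 := Nat.cast_ne_zero.mpr (by omega)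
  have hNθ : (N : ℝ) * θ = 2 * Real.pi := by rw [hθ]; field_simp
  have smul_def : ∀ (A : Matrix.orthogonalGroup (Fin 2) ℝ) (u : Fin 2 → ℝ),
      A • u = (A : Matrix (Fin 2) (Fin 2) ℝ).mulVec u := fun _ _ => rfl
  -- matrix of R^k
  have hRpow : ∀ k : ℕ, ((R ^ k : Matrix.orthogonalGroup (Fin 2) ℝ) :
      Matrix (Fin 2) (Fin 2) ℝ) = rotM (k * θ) := by
    intro k
    induction k with
    | zero => simp [rotM_zero]
    | succ k ih =>
      have : ((R ^ (k+1) : Matrix.orthogonalGroup (Fin 2) ℝ) :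
          Matrix (Fin 2) (Fin 2) ℝ) = ((R ^ k : Matrix.orthogonalGroup (Fin 2) ℝ) :
          Matrix (Fin 2) (Fin 2) ℝ) * (R : Matrix (Fin 2) (Fin 2) ℝ) := by
        push_cast [pow_succ]; ring
      rw [this, ih, hR]
      have : (!![Real.cos θ, -Real.sin θ; Real.sin θ, Real.cos θ] :
          Matrix (Fin 2) (Fin 2) ℝ) = rotM θ := rfl
      rw [this, rotM_mul]
      congr 1
      push_cast; ring
  -- action of R^k on a vector given in polar form
  have hact : ∀ (k : ℕ) (ρ φ : ℝ),
      (R ^ k) • (![ρ * Real.cos φ, ρ * Real.sin φ] : Fin 2 → ℝ) =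
        ![ρ * Real.cos (φ + k * θ), ρ * Real.sin (φ + k * θ)] := by
    intro k ρ φ
    rw [smul_def, hRpow, rotM_mulVec]
    funext i
    fin_cases i <;> simp [Real.cos_add, Real.sin_add] <;> ring
  -- R has order N
  have hRN : R ^ N = 1 := by
    apply Subtype.ext
    rw [hRpow, hNθ]
    have : rotM (2 * Real.pi) = rotM 0 := by
      simp [rotM, Real.cos_two_pi, Real.sin_two_pi]
    rw [this, rotM_zero]; rfl
  have horder : orderOf R = N := by
    rw [orderOf_eq_iff hN0]
    refine ⟨hRN, fun m hm hm0 hRm => ?_⟩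
    have h1 : ((R ^ m : Matrix.orthogonalGroup (Fin 2) ℝ) :
        Matrix (Fin 2) (Fin 2) ℝ) = 1 := by rw [hRm]; rfl
    rw [hRpow] at h1
    have hcos : Real.cos (m * θ) = 1 := by
      have := congr_fun (congr_fun h1 0) 0
      simpa [rotM, Matrix.one_apply] using this
    obtain ⟨n, hn⟩ := (Real.cos_eq_one_iff _).mp hcos
    have hθ0 : θ ≠ 0 := by
      have hpi := Real.pi_pos
      have : 0 < θ := by rw [hθ]; positivity
      exact ne_of_gt this
    have hn2 : (n : ℝ) * N = m := by
      have h2 : ((n : ℝ) * N - m) * θ = 0 := by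
        linear_combination hn + (n : ℝ) * hNθ
      rcases mul_eq_zero.mp h2 with h2 | h2
      · linarith
      · exact absurd h2 hθ0
    have hn3 : n * (N:ℤ) = m := by exact_mod_cast hn2
    have : (1:ℤ) ≤ n ∨ n ≤ 0 := by omega
    rcases this with h | h
    · have : (N:ℤ) ≤ m := by nlinarith
      omega
    · have : (m:ℤ) ≤ 0 := by nlinarith
      omega
  -- power congruence mod N
  have hpowc : ∀ a b : ℕ, a % N = b % N → R ^ a = R ^ b := by
    intro a b h
    rw [← pow_mod_orderOf R a, ← pow_mod_orderOf R b, horder, h]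
  -- R stabilizes each orbit
  have hstab : ∀ (u : Fin 2 → ℝ) (S : Set (Fin 2 → ℝ)),
      S = {x | ∃ k : ℕ, k < N ∧ (R ^ k) • u = x} →
      R ∈ MulAction.stabilizer (Matrix.orthogonalGroup (Fin 2) ℝ) S := by
    intro u S hS
    rw [MulAction.mem_stabilizer_iff]
    ext x
    constructor
    · rintro ⟨y, hy, rfl⟩
      rw [hS] at hy ⊢
      obtain ⟨k, hk, rfl⟩ := hy
      refine ⟨(k + 1) % N, Nat.mod_lt _ hN0, ?_⟩
      show (R ^ ((k + 1) % N)) • u = R • (R ^ k) • u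
      rw [hpowc ((k+1) % N) (k+1) (Nat.mod_mod_of_dvd _ dvd_rfl), pow_succ', mul_smul]
    · intro hx
      rw [hS] at hx
      obtain ⟨k, hk, rfl⟩ := hx
      refine ⟨(R ^ ((k + N - 1) % N)) • u, ?_, ?_⟩
      · rw [hS]; exact ⟨(k + N - 1) % N, Nat.mod_lt _ hN0, rfl⟩
      · show R • (R ^ ((k + N - 1) % N)) • u = (R ^ k) • u
        rw [← mul_smul, ← pow_succ']
        apply congrArg (fun g => g • u)
        apply hpowc
        have h2 : ((k + N - 1) % N + 1) % N = (k + N - 1 + 1) % N :=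
          (Nat.mod_modEq (k + N - 1) N).add_right 1
        rw [h2, show k + N - 1 + 1 = k + N by omega, Nat.add_mod_right, Nat.mod_eq_of_lt hk]
  constructor
  · apply le_antisymm
    · -- any joint stabilizer element is a power of R
      intro A hA
      rw [Subgroup.mem_inf, MulAction.mem_stabilizer_iff, MulAction.mem_stabilizer_iff] at hA
      -- A • v ∈ Sv
      have hvS : v ∈ Sv := by
        rw [hSv]; exact ⟨0, hN0, by rw [pow_zero, one_smul]⟩
      have hwS : w ∈ Sw := by
        rw [hSw]; exact ⟨0, hN0, by rw [pow_zero, one_smul]⟩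
      have hAv : A • v ∈ Sv := by
        rw [← hA.1]; exact Set.smul_mem_smul_set hvS
      have hAw : A • w ∈ Sw := by
        rw [← hA.2]; exact Set.smul_mem_smul_set hwS
      rw [hSv] at hAv
      rw [hSw] at hAw
      obtain ⟨k, hk, hkv⟩ := hAv
      obtain ⟨l, hl, hlw⟩ := hAw
      -- orthogonality relations
      set M : Matrix (Fin 2) (Fin 2) ℝ := (A : Matrix (Fin 2) (Fin 2) ℝ) with hM
      set a : ℝ := M 0 0
      set b : ℝ := M 0 1
      set c : ℝ := M 1 0
      set d : ℝ := M 1 1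
      have hMeta : M = !![a, b; c, d] := Matrix.eta_fin_two M
      have hst : star M * M = 1 := A.2.1
      have h00 : a * a + c * c = 1 := by
        have := congr_fun (congr_fun hst 0) 0
        simpa [Matrix.mul_apply, Fin.sum_univ_two, Matrix.conjTranspose_apply,
          Matrix.one_apply] using this
      have h01 : a * b + c * d = 0 := by
        have := congr_fun (congr_fun hst 0) 1
        simpa [Matrix.mul_apply, Fin.sum_univ_two, Matrix.conjTranspose_apply,
          Matrix.one_apply] using this
      have h11 : b * b + d * d = 1 := by
        have := congr_fun (congr_fun hst 1) 1
        simpa [Matrix.mul_apply, Fin.sum_univ_two, Matrix.conjTranspose_apply,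
          Matrix.one_apply] using this
      set e : ℝ := a * d - b * c with he
      have hee : e * e = 1 := by
        linear_combination (b*b + d*d) * h00 + h11 - (a*b + c*d) * h01
      have hb : b = -c * e := by linear_combination a * h01 - b * h00
      have hd : d = a * e := by linear_combination c * h01 - d * h00
      obtain ⟨γ, hγc, hγs⟩ := exists_angle a c h00
      have hecases : e = 1 ∨ e = -1 := by
        rcases mul_self_eq_one_iff.mp hee with h | h
        · exact Or.inl h
        · exact Or.inr h
      -- compute R^k • v and R^l • w
      have hkv' : (R ^ k) • v = ![r * Real.cos (α + k * θ), r * Real.sin (α + k * θ)] := by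
        rw [hvdef]; exact hact k r α
      have hlw' : (R ^ l) • w = ![s * Real.cos (β + l * θ), s * Real.sin (β + l * θ)] := by
        rw [hwdef]; exact hact l s β
      rcases hecases with he1 | he1
      · -- rotation case: A = R^k
        have hMrot : M = rotM γ := by
          rw [hMeta, hb, hd, he1]
          ext i j
          fin_cases i <;> fin_cases j <;> simp [rotM, hγc, hγs]
        have hAv' : A • v = ![r * Real.cos (α + γ), r * Real.sin (α + γ)] := by
          rw [smul_def, ← hM, hMrot, hvdef, rotM_mulVec]
          funext i
          fin_cases i <;> simp [Real.cos_add, Real.sin_add] <;> ring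
        rw [hAv', hkv'] at hkv
        have hc0 : Real.cos (α + k * θ) = Real.cos (α + γ) := by
          have := congr_fun hkv 0
          simp only [Matrix.cons_val_zero] at this
          exact mul_left_cancel₀ (ne_of_gt hr) this
        have hs0 : Real.sin (α + k * θ) = Real.sin (α + γ) := by
          have := congr_fun hkv 1
          simp only [Matrix.cons_val_one, Matrix.head_cons] at this
          exact mul_left_cancel₀ (ne_of_gt hr) this
        obtain ⟨m, hm⟩ := angle_eq hc0.symm hs0.symm
        have hγeq : γ = k * θ + m * (2 * Real.pi) := by linarith
        have hcos : Real.cos γ = Real.cos (k * θ) := by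
          rw [hγeq, Real.cos_add_int_mul_two_pi]
        have hsin : Real.sin γ = Real.sin (k * θ) := by
          rw [hγeq, Real.sin_add_int_mul_two_pi]
        have : A = R ^ k := by
          apply Subtype.ext
          rw [hRpow, ← hM, hMrot, rotM, rotM, hcos, hsin]
        rw [this]
        exact pow_mem (Subgroup.mem_zpowers R) k
      · -- reflection case: contradiction
        exfalso
        have hMref : M = !![a, c; c, -a] := by
          rw [hMeta, hb, hd, he1]
          ext i j
          fin_cases i <;> fin_cases j <;> simp
        have hAv' : A • v = ![r * Real.cos (γ - α), r * Real.sin (γ - α)] := by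
          rw [smul_def, ← hM, hMref, hvdef]
          funext i
          fin_cases i <;>
            simp [Matrix.mulVec, dotProduct, Fin.sum_univ_two,
              Real.cos_sub, Real.sin_sub, ← hγc, ← hγs] <;> ring
        have hAw' : A • w = ![s * Real.cos (γ - β), s * Real.sin (γ - β)] := by
          rw [smul_def, ← hM, hMref, hwdef]
          funext i
          fin_cases i <;>
            simp [Matrix.mulVec, dotProduct, Fin.sum_univ_two,
              Real.cos_sub, Real.sin_sub, ← hγc, ← hγs] <;> ring
        rw [hAv', hkv'] at hkv
        rw [hAw', hlw'] at hlw
        have hc0 : Real.cos (α + k * θ) = Real.cos (γ - α) := by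
          have := congr_fun hkv 0
          simp only [Matrix.cons_val_zero] at this
          exact mul_left_cancel₀ (ne_of_gt hr) this
        have hs0 : Real.sin (α + k * θ) = Real.sin (γ - α) := by
          have := congr_fun hkv 1
          simp only [Matrix.cons_val_one, Matrix.head_cons] at this
          exact mul_left_cancel₀ (ne_of_gt hr) this
        have hc1 : Real.cos (β + l * θ) = Real.cos (γ - β) := by
          have := congr_fun hlw 0
          simp only [Matrix.cons_val_zero] at this
          exact mul_left_cancel₀ (ne_of_gt hs) this
        have hs1 : Real.sin (β + l * θ) = Real.sin (γ - β) := by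
          have := congr_fun hlw 1
          simp only [Matrix.cons_val_one, Matrix.head_cons] at this
          exact mul_left_cancel₀ (ne_of_gt hs) this
        obtain ⟨m, hm⟩ := angle_eq hc0.symm hs0.symm
        obtain ⟨m', hm'⟩ := angle_eq hc1.symm hs1.symm
        -- γ - α = α + kθ + 2πm ; γ - β = β + lθ + 2πm'
        have key : 2 * (β - α) = ((k:ℝ) - l) * θ + ((m:ℝ) - m') * (2 * Real.pi) := by
          linarith
        have key2 : (N:ℝ) * (2 * (β - α)) =
            ((k:ℝ) - (l:ℝ)) * (2 * Real.pi) + (N:ℝ) * (((m:ℝ) - (m':ℝ)) * (2 * Real.pi)) := by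
          linear_combination (N:ℝ) * key + ((k:ℝ) - (l:ℝ)) * hNθ
        apply hoff ((k:ℤ) - l + N * (m - m'))
        rw [div_eq_iff Real.pi_ne_zero]
        push_cast
        linear_combination key2 / 2
    · rw [Subgroup.zpowers_le, Subgroup.mem_inf]
      exact ⟨hstab v Sv hSv, hstab w Sw hSw⟩
  · rw [Nat.card_zpowers, horder]
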